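/- In an unmixed tree, no joint belongs to any maximal independent set of facets of cardinality α(Δ); in particular, a joint of an unmixed tree is never a leaf. -/
import Mathlib


open Finset

variable {α : Type*} [DecidableEq α]

/-- A set of vertices meeting every facet. -/
def IsVertexCover (Δ : Finset (Finset α)) (A : Finset α) : Prop :=
  ∀ F ∈ Δ, (A ∩ F).Nonempty

/-- A vertex cover none of whose proper subsets is a cover. -/
def IsMinimalVertexCover (Δ : Finset (Finset α)) (A : Finset α) : Prop :=
  IsVertexCover Δ A ∧ ∀ B ⊆ A, IsVertexCover Δ B → B = A

/-- The vertex covering number α(Δ). -/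
noncomputable def coverNum (Δ : Finset (Finset α)) : ℕ :=
  sInf {n | ∃ A : Finset α, IsVertexCover Δ A ∧ A.card = n}

/-- All minimal vertex covers have the same cardinality. -/
def Unmixed (Δ : Finset (Finset α)) : Prop :=
  ∀ A B : Finset α, IsMinimalVertexCover Δ A → IsMinimalVertexCover Δ B →
    A.card = B.card

/-- `F` is a leaf of `Δ`: it is the only facet, or some facet `G ≠ F`
satisfies `F ∩ F' ⊆ F ∩ G` for every facet `F' ≠ F`. -/
def IsLeaf (Δ : Finset (Finset α)) (F : Finset α) : Prop :=
  F ∈ Δ ∧ (Δ = {F} ∨ ∃ G ∈ Δ, G ≠ F ∧ ∀ F' ∈ Δ, F' ≠ F → F ∩ F' ⊆ F ∩ G)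

/-- `G` is a joint of the leaf `F` in `Δ`. -/
def IsJoint (Δ : Finset (Finset α)) (G F : Finset α) : Prop :=
  F ∈ Δ ∧ G ∈ Δ ∧ G ≠ F ∧ (∀ F' ∈ Δ, F' ≠ F → F ∩ F' ⊆ F ∩ G) ∧
    (F ∩ G).Nonempty

def HasLeaf (Δ : Finset (Finset α)) : Prop := ∃ F, IsLeaf Δ F

/-- Every nonempty subcollection has a leaf. -/
def IsForest (Δ : Finset (Finset α)) : Prop :=
  ∀ Γ ⊆ Δ, Γ.Nonempty → HasLeaf Γ

/-- Any two facets are linked by a chain of facets with consecutive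
nonempty intersections. -/
def ComplexConnected (Δ : Finset (Finset α)) : Prop :=
  ∀ F ∈ Δ, ∀ G ∈ Δ,
    Relation.ReflTransGen (fun A B => A ∈ Δ ∧ B ∈ Δ ∧ (A ∩ B).Nonempty) F G

def IsTree (Δ : Finset (Finset α)) : Prop := ComplexConnected Δ ∧ IsForest Δ

/-- An independent (pairwise disjoint) set of facets of `Δ`. -/
def IndependentFacets (Δ S : Finset (Finset α)) : Prop :=
  S ⊆ Δ ∧ ∀ F ∈ S, ∀ G ∈ S, F ≠ G → F ∩ G = ∅

/-- The independence number β(Δ). -/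
noncomputable def indepNum (Δ : Finset (Finset α)) : ℕ :=
  sSup {n | ∃ S : Finset (Finset α), IndependentFacets Δ S ∧ S.card = n}

/-- An independent set of facets not properly contained in another. -/
def MaximalIndependent (Δ S : Finset (Finset α)) : Prop :=
  IndependentFacets Δ S ∧ ∀ T, IndependentFacets Δ T → S ⊆ T → T = S

/-- `v` is a free vertex of the facet `F`: it belongs to no other facet. -/
def FreeVertex (Δ : Finset (Finset α)) (v : α) (F : Finset α) : Prop :=
  F ∈ Δ ∧ v ∈ F ∧ ∀ G ∈ Δ, v ∈ G → G = F

/-- The facets form an antichain (they are the maximal faces). -/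
def FacetAntichain (Δ : Finset (Finset α)) : Prop :=
  ∀ F ∈ Δ, ∀ G ∈ Δ, F ⊆ G → F = G

lemma exists_minimal_subcover (Δ : Finset (Finset α)) (A : Finset α)
    (hA : IsVertexCover Δ A) : ∃ B ⊆ A, IsMinimalVertexCover Δ B := by
  induction A using Finset.strongInduction with
  | _ A ih =>
    by_cases h : ∀ B ⊆ A, IsVertexCover Δ B → B = A
    · exact ⟨A, Finset.Subset.rfl, hA, h⟩
    · push_neg at h
      obtain ⟨B, hBA, hB, hne⟩ := h
      obtain ⟨C, hCB, hC⟩ := ih B (hBA.ssubset_of_ne hne) hB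
      exact ⟨C, hCB.trans hBA, hC⟩

lemma coverNum_exists (Δ : Finset (Finset α)) (hne : ∀ F ∈ Δ, F.Nonempty) :
    ∃ A, IsVertexCover Δ A ∧ A.card = coverNum Δ := by
  have hset : {n | ∃ A : Finset α, IsVertexCover Δ A ∧ A.card = n}.Nonempty := by
    refine ⟨(Δ.biUnion id).card, Δ.biUnion id, ?_, rfl⟩
    intro F hF
    obtain ⟨x, hx⟩ := hne F hF
    exact ⟨x, mem_inter.2 ⟨mem_biUnion.2 ⟨F, hF, hx⟩, hx⟩⟩
  exact Nat.sInf_mem hset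

lemma minimal_card (Δ : Finset (Finset α)) (hne : ∀ F ∈ Δ, F.Nonempty)
    (hu : Unmixed Δ) {M : Finset α} (hM : IsMinimalVertexCover Δ M) :
    M.card = coverNum Δ := by
  obtain ⟨A, hA, hcard⟩ := coverNum_exists Δ hne
  have hAmin : IsMinimalVertexCover Δ A := by
    refine ⟨hA, fun B hBA hB => ?_⟩
    have h1 : coverNum Δ ≤ B.card := Nat.sInf_le ⟨B, hB, rfl⟩
    exact Finset.eq_of_subset_of_card_le hBA (by omega)
  rw [hu M A hM hAmin, hcard]

lemma cover_subset_union (Δ : Finset (Finset α)) {S : Finset (Finset α)}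
    (hS : IndependentFacets Δ S) {B : Finset α} (hB : IsVertexCover Δ B)
    (hcard : B.card = S.card) {b : α} (hb : b ∈ B) : ∃ H ∈ S, b ∈ H := by
  classical
  have hch : ∀ H ∈ S, ((B ∩ H).Nonempty) := fun H hH => hB H (hS.1 hH)
  set f : Finset α → α := fun H =>
    if h : (B ∩ H).Nonempty then h.choose else b with hf
  have hfmem : ∀ H ∈ S, f H ∈ B ∩ H := by
    intro H hH
    have h := hch H hH
    simp only [hf, dif_pos h]
    exact h.choose_spec
  have hinj : Set.InjOn f S := by
    intro H hH H' hH' heq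
    by_contra hne'
    have h1 : f H ∈ B ∩ H := hfmem H hH
    have h2 : f H ∈ B ∩ H' := heq ▸ hfmem H' hH'
    have : f H ∈ H ∩ H' := mem_inter.2 ⟨(mem_inter.1 h1).2, (mem_inter.1 h2).2⟩
    rw [hS.2 H hH H' hH' hne'] at this
    exact absurd this (notMem_empty _)
  have himg : S.image f ⊆ B := by
    intro x hx
    obtain ⟨H, hH, rfl⟩ := mem_image.1 hx
    exact (mem_inter.1 (hfmem H hH)).1
  have hcardimg : (S.image f).card = B.card := by
    rw [Finset.card_image_of_injOn hinj, hcard]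
  have : S.image f = B := Finset.eq_of_subset_of_card_le himg (by omega)
  rw [← this] at hb
  obtain ⟨H, hH, hfH⟩ := mem_image.1 hb
  exact ⟨H, hH, hfH ▸ (mem_inter.1 (hfmem H hH)).2⟩

/-- In an unmixed tree, no joint belongs to a maximal independent set of
facets of cardinality α(Δ); in particular, a joint is never a leaf. -/
theorem joint_not_in_maximal_independent (Δ : Finset (Finset α))
    (hmax : FacetAntichain Δ) (hne : ∀ F ∈ Δ, F.Nonempty)
    (htree : IsTree Δ) (hunmixed : Unmixed Δ)
    (G F : Finset α) (hjoint : IsJoint Δ G F) :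
    (∀ S : Finset (Finset α), MaximalIndependent Δ S → S.card = coverNum Δ →
      G ∉ S) ∧ ¬ IsLeaf Δ G := by
  obtain ⟨hFΔ, hGΔ, hGF, hleaf, hFG⟩ := hjoint
  -- a free vertex of F
  have hFnG : (F \ G).Nonempty := by
    rw [sdiff_nonempty]
    intro hsub
    exact hGF ((hmax F hFΔ G hGΔ hsub).symm)
  obtain ⟨v, hv⟩ := hFnG
  have hvF : v ∈ F := (mem_sdiff.1 hv).1
  have hvG : v ∉ G := (mem_sdiff.1 hv).2
  have hvfree : ∀ F' ∈ Δ, F' ≠ F → v ∉ F' := by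
    intro F' hF' hne' hvF'
    exact hvG (mem_inter.1 (hleaf F' hF' hne' (mem_inter.2 ⟨hvF, hvF'⟩))).2
  have hGnF : (G \ F).Nonempty := by
    rw [sdiff_nonempty]
    intro hsub
    exact hGF (hmax G hGΔ F hFΔ hsub)
  constructor
  · -- Part 1
    rintro S ⟨⟨hSΔ, hSdisj⟩, -⟩ hScard hGS
    have hFS : F ∉ S := by
      intro hFS
      have := hSdisj F hFS G hGS (fun h => hGF h.symm)
      rw [this] at hFG
      exact hFG.ne_empty rfl
    -- the cover B₀
    set B₀ : Finset α := insert v ((G \ F) ∪ (Δ.biUnion id \ (F ∪ G))) with hB₀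
    have hB₀cover : IsVertexCover Δ B₀ := by
      intro F' hF'
      by_cases h1 : F' = F
      · exact ⟨v, mem_inter.2 ⟨mem_insert_self _ _, h1 ▸ hvF⟩⟩
      by_cases h2 : F' = G
      · obtain ⟨g, hg⟩ := hGnF
        exact ⟨g, mem_inter.2 ⟨mem_insert_of_mem (mem_union_left _ hg),
          h2 ▸ (mem_sdiff.1 hg).1⟩⟩
      by_cases h3 : F' ⊆ F ∪ G
      · exfalso
        apply h2
        apply hmax F' hF' G hGΔ
        intro x hx
        rcases mem_union.1 (h3 hx) with hxF | hxG
        · exact (mem_inter.1 (hleaf F' hF' h1 (mem_inter.2 ⟨hxF, hx⟩))).2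
        · exact hxG
      · rw [Finset.not_subset] at h3
        obtain ⟨x, hxF', hxFG⟩ := h3
        refine ⟨x, mem_inter.2 ⟨mem_insert_of_mem (mem_union_right _
          (mem_sdiff.2 ⟨mem_biUnion.2 ⟨F', hF', hxF'⟩, hxFG⟩)), hxF'⟩⟩
    obtain ⟨B, hBB₀, hBmin⟩ := exists_minimal_subcover Δ B₀ hB₀cover
    have hBcard : B.card = coverNum Δ := minimal_card Δ hne hunmixed hBmin
    have hvB : v ∈ B := by
      obtain ⟨b, hb⟩ := hBmin.1 F hFΔ
      have hbB := (mem_inter.1 hb).1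
      have hbF := (mem_inter.1 hb).2
      rcases mem_insert.1 (hBB₀ hbB) with rfl | hb'
      · exact hbB
      rcases mem_union.1 hb' with hb'' | hb''
      · exact absurd hbF (fun h => (mem_sdiff.1 hb'').2 h)
      · exact absurd (mem_union_left G hbF) (mem_sdiff.1 hb'').2
    obtain ⟨H, hHS, hvH⟩ := cover_subset_union Δ ⟨hSΔ, hSdisj⟩ hBmin.1
      (by rw [hBcard, hScard]) hvB
    have hHF : H ≠ F := fun h => hFS (h ▸ hHS)
    exact hvfree H (hSΔ hHS) hHF hvH
  · -- Part 2
    rintro ⟨-, hGleaf⟩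
    rcases hGleaf with hsingle | ⟨G', hG'Δ, hG'G, hleaf'⟩
    · rw [hsingle, mem_singleton] at hFΔ
      exact hGF hFΔ.symm
    have hGnG' : (G \ G').Nonempty := by
      rw [sdiff_nonempty]
      intro hsub
      exact hG'G ((hmax G hGΔ G' hG'Δ hsub).symm)
    obtain ⟨u, hu⟩ := hGnG'
    have huG : u ∈ G := (mem_sdiff.1 hu).1
    have huG' : u ∉ G' := (mem_sdiff.1 hu).2
    have hufree : ∀ F' ∈ Δ, F' ≠ G → u ∉ F' := by
      intro F' hF' hne' huF'
      exact huG' (mem_inter.1 (hleaf' F' hF' hne' (mem_inter.2 ⟨huG, huF'⟩))).2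
    have huF : u ∉ F := hufree F hFΔ (fun h => hGF h.symm)
    obtain ⟨f, hf⟩ := hFG
    have hfF : f ∈ F := (mem_inter.1 hf).1
    have hfG : f ∈ G := (mem_inter.1 hf).2
    -- the cover C₀
    set C₀ : Finset α := insert v (insert u (Δ.biUnion id \ (F ∪ G))) with hC₀
    have hC₀cover : IsVertexCover Δ C₀ := by
      intro F' hF'
      by_cases h1 : F' = F
      · exact ⟨v, mem_inter.2 ⟨mem_insert_self _ _, h1 ▸ hvF⟩⟩
      by_cases h2 : F' = G
      · exact ⟨u, mem_inter.2 ⟨mem_insert_of_mem (mem_insert_self _ _),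
          h2 ▸ huG⟩⟩
      by_cases h3 : F' ⊆ F ∪ G
      · exfalso
        apply h2
        apply hmax F' hF' G hGΔ
        intro x hx
        rcases mem_union.1 (h3 hx) with hxF | hxG
        · exact (mem_inter.1 (hleaf F' hF' h1 (mem_inter.2 ⟨hxF, hx⟩))).2
        · exact hxG
      · rw [Finset.not_subset] at h3
        obtain ⟨x, hxF', hxFG⟩ := h3
        refine ⟨x, mem_inter.2 ⟨mem_insert_of_mem (mem_insert_of_mem
          (mem_sdiff.2 ⟨mem_biUnion.2 ⟨F', hF', hxF'⟩, hxFG⟩)), hxF'⟩⟩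
    obtain ⟨C, hCC₀, hCmin⟩ := exists_minimal_subcover Δ C₀ hC₀cover
    have hCcard : C.card = coverNum Δ := minimal_card Δ hne hunmixed hCmin
    have hvC : v ∈ C := by
      obtain ⟨b, hb⟩ := hCmin.1 F hFΔ
      have hbC := (mem_inter.1 hb).1
      have hbF := (mem_inter.1 hb).2
      rcases mem_insert.1 (hCC₀ hbC) with rfl | hb'
      · exact hbC
      rcases mem_insert.1 hb' with rfl | hb''
      · exact absurd hbF huF
      · exact absurd (mem_union_left G hbF) (mem_sdiff.1 hb'').2
    have huC : u ∈ C := by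
      obtain ⟨b, hb⟩ := hCmin.1 G hGΔ
      have hbC := (mem_inter.1 hb).1
      have hbG := (mem_inter.1 hb).2
      rcases mem_insert.1 (hCC₀ hbC) with rfl | hb'
      · exact absurd hbG hvG
      rcases mem_insert.1 hb' with rfl | hb''
      · exact hbC
      · exact absurd (mem_union_right F hbG) (mem_sdiff.1 hb'').2
    have hvu : v ≠ u := fun h => hvG (h ▸ huG)
    -- the smaller cover C'
    set C' : Finset α := insert f ((C.erase v).erase u) with hC'
    have hC'cover : IsVertexCover Δ C' := by
      intro F' hF'
      by_cases h1 : F' = F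
      · exact ⟨f, mem_inter.2 ⟨mem_insert_self _ _, h1 ▸ hfF⟩⟩
      by_cases h2 : F' = G
      · exact ⟨f, mem_inter.2 ⟨mem_insert_self _ _, h2 ▸ hfG⟩⟩
      obtain ⟨c, hc⟩ := hCmin.1 F' hF'
      have hcC := (mem_inter.1 hc).1
      have hcF' := (mem_inter.1 hc).2
      have hcv : c ≠ v := fun h => hvfree F' hF' h1 (h ▸ hcF')
      have hcu : c ≠ u := fun h => hufree F' hF' h2 (h ▸ hcF')
      exact ⟨c, mem_inter.2 ⟨mem_insert_of_mem
        (mem_erase.2 ⟨hcu, mem_erase.2 ⟨hcv, hcC⟩⟩), hcF'⟩⟩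
    have hC'card : C'.card ≤ C.card - 1 := by
      have h1 : u ∈ C.erase v := mem_erase.2 ⟨Ne.symm hvu, huC⟩
      have h2 : ((C.erase v).erase u).card = C.card - 2 := by
        rw [Finset.card_erase_of_mem h1, Finset.card_erase_of_mem hvC]; omega
      calc C'.card ≤ ((C.erase v).erase u).card + 1 := Finset.card_insert_le _ _
        _ = C.card - 2 + 1 := by rw [h2]
        _ ≤ C.card - 1 := by
            have : 2 ≤ C.card := Finset.one_lt_card.2 ⟨v, hvC, u, huC, hvu⟩
            omega
    have hle : coverNum Δ ≤ C'.card := Nat.sInf_le ⟨C', hC'cover, rfl⟩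
    have hpos : 0 < C.card := Finset.card_pos.2 ⟨v, hvC⟩
    omega
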